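/- Let A, B, Q be real n×n matrices with Q symmetric, Σ_∞ a symmetric solution of the algebraic Riccati equation ΣA + AᵀΣ − ΣBBᵀΣ + Q = 0, Γ = A − BBᵀΣ_∞, and Σ_0 symmetric with Σ_0 − Σ_∞ positive definite. Then Σ_t := Σ_∞ + e^{Γᵀt}((Σ_0 − Σ_∞)⁻¹ + ∫₀ᵗ e^{Γτ}BBᵀe^{Γᵀτ}dτ)⁻¹ e^{Γt} is well-defined for all t ≥ 0 and solves the Riccati differential equation Σ̇ = ΣA + AᵀΣ − ΣBBᵀΣ + Q with Σ_{t=0} = Σ_0. -/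

import Mathlib

open Matrix

namespace Stmt8Aux

attribute [local instance] Matrix.linftyOpNormedAddCommGroup Matrix.linftyOpNormedSpace
  Matrix.linftyOpNormedRing Matrix.linftyOpNormedAlgebra

variable {n : ℕ}

noncomputable def entryCLM (i j : Fin n) : Matrix (Fin n) (Fin n) ℝ →L[ℝ] ℝ :=
  LinearMap.toContinuousLinearMap
    ((LinearMap.proj j : (Fin n → ℝ) →ₗ[ℝ] ℝ).comp
      (LinearMap.proj i : Matrix (Fin n) (Fin n) ℝ →ₗ[ℝ] (Fin n → ℝ)))

theorem hasDerivAt_entry {f : ℝ → Matrix (Fin n) (Fin n) ℝ} {f' : Matrix (Fin n) (Fin n) ℝ}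
    {t : ℝ} (h : HasDerivAt f f' t) (i j : Fin n) :
    HasDerivAt (fun s => f s i j) (f' i j) t :=
  (entryCLM i j).hasFDerivAt.comp_hasDerivAt t h

theorem hasDerivAt_of_entries {f : ℝ → Matrix (Fin n) (Fin n) ℝ} {f' : Matrix (Fin n) (Fin n) ℝ}
    {t : ℝ} (h : ∀ i j, HasDerivAt (fun s => f s i j) (f' i j) t) :
    HasDerivAt f f' t := by
  have e : ∀ M : Matrix (Fin n) (Fin n) ℝ,
      (∑ i : Fin n, ∑ j : Fin n, M i j • Matrix.single i j (1 : ℝ)) = M := by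
    intro M
    simp only [smul_single, smul_eq_mul, mul_one]
    exact (matrix_eq_sum_single M).symm
  have h1 : HasDerivAt (fun s => ∑ i : Fin n, ∑ j : Fin n, f s i j • Matrix.single i j (1 : ℝ))
      (∑ i : Fin n, ∑ j : Fin n, f' i j • Matrix.single i j (1 : ℝ)) t := by
    refine HasDerivAt.fun_sum fun i _ => ?_
    exact HasDerivAt.fun_sum fun j _ => (h i j).smul_const _
  have h2 : (fun s => ∑ i : Fin n, ∑ j : Fin n, f s i j • Matrix.single i j (1 : ℝ)) = f :=
    funext fun s => e (f s)
  rw [h2, e f'] at h1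
  exact h1

theorem gcont (Γ Bm : Matrix (Fin n) (Fin n) ℝ) :
    Continuous fun τ : ℝ =>
      NormedSpace.exp (τ • Γ) * Bm * Bmᵀ * NormedSpace.exp (τ • Γᵀ) := by
  have h1 : Continuous fun τ : ℝ => NormedSpace.exp (τ • Γ) :=
    NormedSpace.exp_continuous.comp (continuous_id.smul continuous_const)
  have h2 : Continuous fun τ : ℝ => NormedSpace.exp (τ • Γᵀ) :=
    NormedSpace.exp_continuous.comp (continuous_id.smul continuous_const)
  exact ((h1.mul continuous_const).mul continuous_const).mul h2

theorem gcont_entry (Γ Bm : Matrix (Fin n) (Fin n) ℝ) (i j : Fin n) :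
    Continuous fun τ : ℝ =>
      (NormedSpace.exp (τ • Γ) * Bm * Bmᵀ * NormedSpace.exp (τ • Γᵀ)) i j :=
  (continuous_apply j).comp ((continuous_apply i).comp (gcont Γ Bm))

theorem gsym (Γ Bm : Matrix (Fin n) (Fin n) ℝ) (τ : ℝ) :
    (NormedSpace.exp (τ • Γ) * Bm * Bmᵀ * NormedSpace.exp (τ • Γᵀ)).PosSemidef := by
  have hT : NormedSpace.exp (τ • Γᵀ) = (NormedSpace.exp (τ • Γ))ᵀ := by
    rw [← transpose_smul, Matrix.exp_transpose]
  have h1 : NormedSpace.exp (τ • Γ) * Bm * Bmᵀ * NormedSpace.exp (τ • Γᵀ)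
      = (NormedSpace.exp (τ • Γ) * Bm) * (NormedSpace.exp (τ • Γ) * Bm)ᴴ := by
    rw [hT]
    have : (NormedSpace.exp (τ • Γ) * Bm)ᴴ = Bmᵀ * (NormedSpace.exp (τ • Γ))ᵀ := by
      ext i j
      simp [conjTranspose_apply, transpose_apply, mul_apply, mul_comm]
    rw [this, Matrix.mul_assoc, Matrix.mul_assoc]
  rw [h1]
  exact posSemidef_self_mul_conjTranspose _

theorem posdefK (Γ Bm C : Matrix (Fin n) (Fin n) ℝ) (hC : C.PosDef) (t : ℝ) (ht : 0 ≤ t) :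
    (C + Matrix.of fun i j => ∫ τ in (0:ℝ)..t,
      (NormedSpace.exp (τ • Γ) * Bm * Bmᵀ * NormedSpace.exp (τ • Γᵀ)) i j).PosDef := by
  set g : ℝ → Matrix (Fin n) (Fin n) ℝ :=
    fun τ => NormedSpace.exp (τ • Γ) * Bm * Bmᵀ * NormedSpace.exp (τ • Γᵀ) with hgdef
  have hgps : ∀ τ, (g τ).PosSemidef := fun τ => gsym Γ Bm τ
  have hcont : ∀ i j, Continuous fun τ => g τ i j := fun i j => gcont_entry Γ Bm i j
  have hIt : (Matrix.of fun i j => ∫ τ in (0:ℝ)..t, g τ i j).PosSemidef := by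
    refine posSemidef_iff_dotProduct_mulVec.mpr ⟨?_, ?_⟩
    · ext i j
      have hsym : ∀ τ, g τ j i = g τ i j := by
        intro τ
        have h := (hgps τ).1
        calc g τ j i = (g τ)ᴴ i j := by simp [conjTranspose_apply]
        _ = g τ i j := by rw [h]
      simp only [conjTranspose_apply, of_apply, star_trivial]
      simp_rw [hsym]
    · intro x
      have e1 : star x ⬝ᵥ ((Matrix.of fun i j => ∫ τ in (0:ℝ)..t, g τ i j) *ᵥ x)
          = ∫ τ in (0:ℝ)..t, star x ⬝ᵥ (g τ *ᵥ x) := by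
        simp only [dotProduct, mulVec, of_apply]
        have hA : ∀ i, (∑ j, (∫ τ in (0:ℝ)..t, g τ i j) * x j)
            = ∫ τ in (0:ℝ)..t, ∑ j, g τ i j * x j := by
          intro i
          simp_rw [← intervalIntegral.integral_mul_const]
          exact (intervalIntegral.integral_finset_sum
            (fun j _ => ((hcont i j).mul continuous_const).intervalIntegrable _ _)).symm
        simp_rw [hA, ← intervalIntegral.integral_const_mul]
        refine (intervalIntegral.integral_finset_sum fun i _ => ?_).symm
        exact (continuous_const.mul (continuous_finset_sum _
          (fun j _ => (hcont i j).mul continuous_const))).intervalIntegrable _ _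
      rw [e1]
      exact intervalIntegral.integral_nonneg ht fun τ _ => (hgps τ).dotProduct_mulVec_nonneg x
  exact hC.add_posSemidef hIt

theorem key (Γ Bm Sinf C W : Matrix (Fin n) (Fin n) ℝ)
    (K : ℝ → Matrix (Fin n) (Fin n) ℝ)
    (hK : ∀ s, K s = C + Matrix.of fun i j =>
      ∫ τ in (0:ℝ)..s, (NormedSpace.exp (τ • Γ) * Bm * Bmᵀ * NormedSpace.exp (τ • Γᵀ)) i j)
    (t : ℝ) (hKt : IsUnit (K t))
    (hW : W = Sinf + NormedSpace.exp (t • Γᵀ) * (K t)⁻¹ * NormedSpace.exp (t • Γ)) :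
    ∀ i j, HasDerivAt
      (fun s => (Sinf + NormedSpace.exp (s • Γᵀ) * (K s)⁻¹ * NormedSpace.exp (s • Γ)) i j)
      ((Γᵀ * (W - Sinf) + (W - Sinf) * Γ - (W - Sinf) * Bm * Bmᵀ * (W - Sinf)) i j) t := by
  set g : ℝ → Matrix (Fin n) (Fin n) ℝ :=
    fun τ => NormedSpace.exp (τ • Γ) * Bm * Bmᵀ * NormedSpace.exp (τ • Γᵀ) with hgdef
  have hgc : Continuous g := gcont Γ Bm
  have hKd : HasDerivAt K (g t) t := by
    apply hasDerivAt_of_entries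
    intro i j
    have hFTC : HasDerivAt (fun s => ∫ τ in (0:ℝ)..s, g τ i j) (g t i j) t :=
      (Continuous.integral_hasStrictDerivAt (gcont_entry Γ Bm i j) 0 t).hasDerivAt
    have hfe : (fun s => K s i j) = fun s => C i j + ∫ τ in (0:ℝ)..s, g τ i j :=
      funext fun s => by rw [hK s]; rfl
    rw [hfe]
    exact hFTC.const_add (C i j)
  have hMd : HasDerivAt (fun s => (K s)⁻¹) (-((K t)⁻¹ * g t * (K t)⁻¹)) t := by
    have h1 := hasFDerivAt_ringInverse (𝕜 := ℝ) (R := Matrix (Fin n) (Fin n) ℝ) hKt.unit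
    rw [hKt.unit_spec] at h1
    have h2 := h1.comp_hasDerivAt t hKd
    have hfe : (Ring.inverse ∘ K) = fun s => (K s)⁻¹ :=
      funext fun s => (Matrix.nonsing_inv_eq_ringInverse (K s)).symm
    rw [hfe] at h2
    refine h2.congr_deriv ?_
    simp [ContinuousLinearMap.mulLeftRight_apply, Matrix.coe_units_inv, hKt.unit_spec]
  have hE : HasDerivAt (fun s : ℝ => NormedSpace.exp (s • Γ))
      (NormedSpace.exp (t • Γ) * Γ) t := hasDerivAt_exp_smul_const Γ t
  have hE' : HasDerivAt (fun s : ℝ => NormedSpace.exp (s • Γᵀ))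
      (Γᵀ * NormedSpace.exp (t • Γᵀ)) t := hasDerivAt_exp_smul_const' Γᵀ t
  have hP := ((hE'.mul hMd).mul hE).const_add Sinf
  have hfinal : HasDerivAt
      (fun s => Sinf + NormedSpace.exp (s • Γᵀ) * (K s)⁻¹ * NormedSpace.exp (s • Γ))
      (Γᵀ * (W - Sinf) + (W - Sinf) * Γ - (W - Sinf) * Bm * Bmᵀ * (W - Sinf)) t := by
    refine hP.congr_deriv ?_
    rw [hW]
    simp only [add_sub_cancel_left, hgdef, Pi.mul_apply]
    noncomm_ring
  exact fun i j => hasDerivAt_entry hfinal i j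

end Stmt8Aux

theorem stmt_8 {n : ℕ} (A B Q Sinf S0 : Matrix (Fin n) (Fin n) ℝ)
    (hQ : Qᵀ = Q) (hSinf : Sinfᵀ = Sinf) (hS0 : S0ᵀ = S0)
    (hARE : Sinf * A + Aᵀ * Sinf - Sinf * B * Bᵀ * Sinf + Q = 0)
    (hpos : (S0 - Sinf).PosDef) :
    let Γ : Matrix (Fin n) (Fin n) ℝ := A - B * Bᵀ * Sinf
    let K : ℝ → Matrix (Fin n) (Fin n) ℝ := fun t =>
      (S0 - Sinf)⁻¹ + Matrix.of fun i j =>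
        ∫ τ in (0:ℝ)..t,
          (NormedSpace.exp (τ • Γ) * B * Bᵀ * NormedSpace.exp (τ • Γᵀ)) i j
    let S : ℝ → Matrix (Fin n) (Fin n) ℝ := fun t =>
      Sinf + NormedSpace.exp (t • Γᵀ) * (K t)⁻¹ * NormedSpace.exp (t • Γ)
    S 0 = S0 ∧
    ∀ t : ℝ, 0 ≤ t → IsUnit (K t) ∧
      ∀ i j, HasDerivAt (fun s => S s i j)
        ((S t * A + Aᵀ * S t - S t * B * Bᵀ * S t + Q) i j) t := by
  intro Γ K S
  have hdet : IsUnit (S0 - Sinf).det := hpos.det_pos.ne'.isUnit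
  constructor
  · have hK0 : K 0 = (S0 - Sinf)⁻¹ := by
      have hz : (Matrix.of fun i j => ∫ τ in (0:ℝ)..(0:ℝ),
          (NormedSpace.exp (τ • Γ) * B * Bᵀ * NormedSpace.exp (τ • Γᵀ)) i j)
          = (0 : Matrix (Fin n) (Fin n) ℝ) := by
        ext i j
        simp [intervalIntegral.integral_same]
      show (S0 - Sinf)⁻¹ + _ = _
      rw [hz, add_zero]
    show Sinf + NormedSpace.exp ((0:ℝ) • Γᵀ) * (K 0)⁻¹ * NormedSpace.exp ((0:ℝ) • Γ) = S0
    rw [hK0, Matrix.nonsing_inv_nonsing_inv _ hdet]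
    simp [NormedSpace.exp_zero]
  · intro t ht
    have hKpos : (K t).PosDef := Stmt8Aux.posdefK Γ B ((S0 - Sinf)⁻¹) hpos.inv t ht
    have hKu : IsUnit (K t) := hKpos.isUnit
    refine ⟨hKu, ?_⟩
    have hkey := Stmt8Aux.key Γ B Sinf ((S0 - Sinf)⁻¹) (S t) K (fun s => rfl) t hKu rfl
    have hΓt : Γᵀ = Aᵀ - Sinf * B * Bᵀ := by
      show (A - B * Bᵀ * Sinf)ᵀ = _
      rw [transpose_sub, transpose_mul, transpose_mul, transpose_transpose, hSinf,
        Matrix.mul_assoc]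
    have hQeq : Q = Sinf * B * Bᵀ * Sinf - Sinf * A - Aᵀ * Sinf := by
      have h : Q = -(Sinf * A + Aᵀ * Sinf - Sinf * B * Bᵀ * Sinf) := by
        rw [eq_neg_iff_add_eq_zero, add_comm]
        exact hARE
      rw [h]
      noncomm_ring
    have heq : Γᵀ * (S t - Sinf) + (S t - Sinf) * Γ - (S t - Sinf) * B * Bᵀ * (S t - Sinf)
        = S t * A + Aᵀ * S t - S t * B * Bᵀ * S t + Q := by
      rw [hΓt, show Γ = A - B * Bᵀ * Sinf from rfl, hQeq]
      noncomm_ring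
    intro i j
    have h := hkey i j
    rw [heq] at h
    exact h
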